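/- arXiv:1711.08414 — 2 statements merged into one kernel-verified Lean document; each statement's English description precedes it below -/
import Mathlib

section
/- Fix r ≥ 1 and a finite multiset {i_1, ..., i_l} of indices in {1, ..., r}. The set of tuples d = (d_1, ..., d_r) ∈ (ℤ_{≥0})^r satisfying Σ_{k=1}^{l} d_{i_k} - Σ_{j=1}^{r} d_j - Σ_{i=1}^{r+1} (d_i - d_{i-1})²/2 ≥ 0 (with d_0 = d_{r+1} = 0) is finite. -/
/-- Extend a tuple `d ∈ (ℤ_{≥0})^r` to indices `0, 1, ..., r+1` (valued in `ℚ`),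
with the conventions `d_0 = d_{r+1} = 0`. -/
def extQ (r : ℕ) (d : Fin r → ℕ) : ℕ → ℚ :=
  fun i => if h : 1 ≤ i ∧ i ≤ r then (d ⟨i - 1, by omega⟩ : ℚ) else 0

lemma extQ_nonneg (r : ℕ) (d : Fin r → ℕ) (i : ℕ) : 0 ≤ extQ r d i := by
  unfold extQ; split <;> positivity

/-- Fix `r ≥ 1` and a finite multiset `{i_1, ..., i_l}` of indices in `{1, ..., r}`
(modeled as a function `ι : Fin l → ℕ` with values in `{1,...,r}`).  The set of tuples
`d ∈ (ℤ_{≥0})^r` satisfying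
`∑_{k=1}^l d_{i_k} - ∑_{j=1}^r d_j - ∑_{i=1}^{r+1} (d_i - d_{i-1})²/2 ≥ 0`
(with `d_0 = d_{r+1} = 0`) is finite. -/
theorem finiteness_of_superlevel_lattice_points (r l : ℕ) (hr : 1 ≤ r)
    (ι : Fin l → ℕ) (hι : ∀ k, ι k ∈ Finset.Icc 1 r) :
    {d : Fin r → ℕ |
      0 ≤ (∑ k : Fin l, extQ r d (ι k)) - (∑ j ∈ Finset.Icc 1 r, extQ r d j)
        - (∑ i ∈ Finset.Icc 1 (r + 1), (extQ r d i - extQ r d (i - 1)) ^ 2) / 2}.Finite := by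
  apply (Set.finite_Icc (0 : Fin r → ℕ) (fun _ => 2 * l * (r + 1))).subset
  intro d hd
  simp only [Set.mem_setOf_eq] at hd
  refine Set.mem_Icc.mpr ⟨fun i => Nat.zero_le _, fun j => ?_⟩
  -- M = max of d
  have hne : (Finset.univ : Finset (Fin r)).Nonempty := by
    simp [Finset.univ_nonempty_iff]
    exact Fin.pos_iff_nonempty.mp hr
  obtain ⟨i0, -, hi0⟩ := Finset.exists_mem_eq_sup Finset.univ hne d
  set M : ℕ := Finset.univ.sup d with hM
  have hjM : d j ≤ M := Finset.le_sup (Finset.mem_univ j)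
  suffices hMN : M ≤ 2 * l * (r + 1) from le_trans hjM hMN
  -- bounds on extQ
  have hle : ∀ i, extQ r d i ≤ (M : ℚ) := by
    intro i
    unfold extQ
    split
    · exact_mod_cast Nat.cast_le.mpr (Finset.le_sup (Finset.mem_univ _))
    · positivity
  set f : ℕ → ℚ := extQ r d with hf
  set Q : ℚ := ∑ i ∈ Finset.Icc 1 (r + 1), (f i - f (i - 1)) ^ 2 with hQ
  -- step 1: Q ≤ 2 * l * M
  have h1 : ∑ k : Fin l, f (ι k) ≤ (l : ℚ) * M := by
    calc ∑ k : Fin l, f (ι k) ≤ ∑ _k : Fin l, (M : ℚ) :=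
          Finset.sum_le_sum fun k _ => hle _
      _ = (l : ℚ) * M := by simp [mul_comm]
  have h2 : (0 : ℚ) ≤ ∑ j ∈ Finset.Icc 1 r, f j :=
    Finset.sum_nonneg fun i _ => extQ_nonneg r d i
  have hQle : Q ≤ 2 * l * M := by linarith
  -- step 2: M^2 ≤ (r+1) * Q
  set i1 : ℕ := (i0 : ℕ) + 1 with hi1
  have hfi1 : f i1 = (M : ℚ) := by
    have h : 1 ≤ i1 ∧ i1 ≤ r := ⟨Nat.le_add_left 1 _, by omega⟩
    simp only [hf, extQ, dif_pos h]
    have : (⟨i1 - 1, by omega⟩ : Fin r) = i0 := by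
      apply Fin.ext; simp [hi1]
    rw [this, hi0]
  have htel : (M : ℚ) = ∑ i ∈ Finset.range i1, (f (i + 1) - f i) := by
    rw [Finset.sum_range_sub]
    have hf0 : f 0 = 0 := by simp [hf, extQ]
    rw [hfi1, hf0, sub_zero]
  have hcs : (M : ℚ) ^ 2 ≤ i1 * ∑ i ∈ Finset.range i1, (f (i + 1) - f i) ^ 2 := by
    rw [htel]
    simpa using sq_sum_le_card_mul_sum_sq (s := Finset.range i1)
      (f := fun i => f (i + 1) - f i)
  have hsub : ∑ i ∈ Finset.range i1, (f (i + 1) - f i) ^ 2 ≤ Q := by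
    have heq : ∑ i ∈ Finset.range i1, (f (i + 1) - f i) ^ 2
        = ∑ i ∈ Finset.Icc 1 i1, (f i - f (i - 1)) ^ 2 := by
      rw [show Finset.Icc 1 i1 = Finset.Ico 1 (i1 + 1) by rw [Finset.Ico_add_one_right_eq_Icc],
        Finset.sum_Ico_eq_sum_range]
      apply Finset.sum_congr rfl
      intro i _
      simp only [show 1 + i - 1 = i from by omega, Nat.add_comm 1 i,
        Nat.add_sub_cancel]
    rw [heq, hQ]
    apply Finset.sum_le_sum_of_subset_of_nonneg
    · apply Finset.Icc_subset_Icc_right; omega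
    · intro i _ _; positivity
  have hsq : (M : ℚ) ^ 2 ≤ (r + 1) * Q := by
    have hi1r : (i1 : ℚ) ≤ (r : ℚ) + 1 := by
      have : i1 ≤ r + 1 := by omega
      exact_mod_cast this
    have hQ0 : 0 ≤ ∑ i ∈ Finset.range i1, (f (i + 1) - f i) ^ 2 :=
      Finset.sum_nonneg fun i _ => sq_nonneg _
    calc (M : ℚ) ^ 2 ≤ i1 * ∑ i ∈ Finset.range i1, (f (i + 1) - f i) ^ 2 := hcs
      _ ≤ ((r : ℚ) + 1) * ∑ i ∈ Finset.range i1, (f (i + 1) - f i) ^ 2 := by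
          apply mul_le_mul_of_nonneg_right hi1r hQ0
      _ ≤ ((r : ℚ) + 1) * Q := by
          apply mul_le_mul_of_nonneg_left hsub (by positivity)
  -- conclude
  have hM0 : (0 : ℚ) ≤ M := by positivity
  have hfin : (M : ℚ) ≤ 2 * l * (r + 1) := by
    have key : (M : ℚ) ^ 2 ≤ 2 * l * (r + 1) * M := by
      have := mul_le_mul_of_nonneg_left hQle (show (0:ℚ) ≤ (r:ℚ) + 1 by positivity)
      nlinarith [hsq]
    rcases hM0.eq_or_lt with h0 | hpos
    · rw [← h0]; positivity
    · nlinarith [key, hpos]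
  have : (M : ℚ) ≤ ((2 * l * (r + 1) : ℕ) : ℚ) := by push_cast; linarith
  exact_mod_cast this
end

section
/- Fix r ≥ 1 and an index i ∈ {1, ..., r}. If d = (d_1, ..., d_r) ∈ (ℤ_{≥0})^r satisfies d_i - (d_1 + ... + d_r) - Σ_{j=1}^{r+1} (d_j - d_{j-1})²/2 ≥ 0 (with d_0 = d_{r+1} = 0), then d = 0. -/
/-- Fix `r ≥ 1` and an index `i ∈ {1, ..., r}`.  If `d ∈ (ℤ_{≥0})^r` satisfies
`d_i - (d_1 + ⋯ + d_r) - ∑_{j=1}^{r+1} (d_j - d_{j-1})²/2 ≥ 0`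
(with `d_0 = d_{r+1} = 0`), then `d = 0`. -/
theorem superlevel_single_index_forces_zero (r : ℕ) (hr : 1 ≤ r)
    (i : ℕ) (hi : i ∈ Finset.Icc 1 r) (d : Fin r → ℕ)
    (h : 0 ≤ extQ r d i - (∑ j ∈ Finset.Icc 1 r, extQ r d j)
        - (∑ j ∈ Finset.Icc 1 (r + 1), (extQ r d j - extQ r d (j - 1)) ^ 2) / 2) :
    d = 0 := by
  have hnn : ∀ j, 0 ≤ extQ r d j := by
    intro j; unfold extQ; split <;> positivity
  have hle : extQ r d i ≤ ∑ j ∈ Finset.Icc 1 r, extQ r d j :=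
    Finset.single_le_sum (fun j _ => hnn j) hi
  have h0 : (0:ℚ) ≤ ∑ j ∈ Finset.Icc 1 (r + 1), (extQ r d j - extQ r d (j - 1)) ^ 2 :=
    Finset.sum_nonneg (fun j _ => sq_nonneg _)
  have hS : ∑ j ∈ Finset.Icc 1 (r + 1), (extQ r d j - extQ r d (j - 1)) ^ 2 = 0 := by
    linarith
  have hsq : ∀ j ∈ Finset.Icc 1 (r+1), (extQ r d j - extQ r d (j-1))^2 = 0 :=
    (Finset.sum_eq_zero_iff_of_nonneg (fun j _ => sq_nonneg _)).mp hS
  have heq : ∀ j, j ≤ r + 1 → extQ r d j = 0 := by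
    intro j
    induction j with
    | zero => intro _; simp [extQ]
    | succ k ih =>
      intro hk
      have h1 := hsq (k+1) (by simp; omega)
      have h2 : extQ r d (k+1) = extQ r d k := by
        have := pow_eq_zero_iff (n := 2) (by norm_num) |>.mp h1
        have : extQ r d (k+1) - extQ r d ((k+1) - 1) = 0 := this
        simp only [Nat.add_sub_cancel] at this
        linarith
      rw [h2]; exact ih (by omega)
  funext k
  have hk := heq (k.1+1) (by omega)
  unfold extQ at hk
  rw [dif_pos ⟨by omega, by omega⟩] at hk
  simp only [Nat.add_sub_cancel] at hk
  have : d ⟨k.1, k.2⟩ = 0 := by exact_mod_cast hk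
  simpa using this
end
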